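/- (Proposition 1, part 3) For every n ≥ 1, any two distinct elements v, w of SA(n) are orthogonal with respect to the Euclidean scalar product on ℝ^(2^n), i.e. ⟨v, w⟩ = 0. -/

import Mathlib

noncomputable def Smat (k : ℕ) : Matrix (Fin (2 ^ (k + 1))) (Fin (2 ^ k)) ℝ :=
  Matrix.of fun i j =>
    if (i : ℕ) < 2 ^ k then (if (i : ℕ) = (j : ℕ) then 1 else 0)
    else (if (i : ℕ) + (j : ℕ) = 2 ^ (k + 1) - 1 then 1 else 0)

noncomputable def Amat (k : ℕ) : Matrix (Fin (2 ^ (k + 1))) (Fin (2 ^ k)) ℝ :=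
  Matrix.of fun i j =>
    if (i : ℕ) < 2 ^ k then (if (i : ℕ) = (j : ℕ) then -1 else 0)
    else (if (i : ℕ) + (j : ℕ) = 2 ^ (k + 1) - 1 then 1 else 0)

noncomputable def Fmat (b : Bool) (k : ℕ) : Matrix (Fin (2 ^ (k + 1))) (Fin (2 ^ k)) ℝ :=
  if b then Amat k else Smat k

noncomputable def prodVec : (n : ℕ) → (Fin n → Bool) → (Fin (2 ^ n) → ℝ)
  | 0, _ => fun _ => 1
  | n + 1, c => (Fmat (c (Fin.last n)) n).mulVec (prodVec n fun i => c i.castSucc)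

def SA (n : ℕ) : Set (Fin (2 ^ n) → ℝ) := { v | ∃ c : Fin n → Bool, v = prodVec n c }

noncomputable def sg (b : Bool) : ℝ := if b then -1 else 1

lemma pow_split (k : ℕ) : (2:ℕ) ^ (k + 1) = 2 ^ k + 2 ^ k := by rw [pow_succ]; ring

lemma Fmat_apply (b : Bool) (k : ℕ) (i : Fin (2 ^ (k + 1))) (j : Fin (2 ^ k)) :
    Fmat b k i j =
      if (i : ℕ) < 2 ^ k then (if (i : ℕ) = (j : ℕ) then sg b else 0)
      else (if (i : ℕ) + (j : ℕ) = 2 ^ (k + 1) - 1 then 1 else 0) := by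
  cases b <;> simp [Fmat, Amat, Smat, sg]

lemma mulVec_lt (b : Bool) (k : ℕ) (x : Fin (2 ^ k) → ℝ) (i : Fin (2 ^ (k + 1)))
    (h : (i : ℕ) < 2 ^ k) :
    (Fmat b k).mulVec x i = sg b * x ⟨i, h⟩ := by
  unfold Matrix.mulVec dotProduct
  rw [Finset.sum_eq_single (⟨(i : ℕ), h⟩ : Fin (2 ^ k))]
  · simp [Fmat_apply, h]
  · intro j _ hj
    simp only [Fmat_apply, h, if_true]
    rw [if_neg, zero_mul]
    intro he
    exact hj (by ext; simp [← he])
  · simp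

lemma mulVec_ge (b : Bool) (k : ℕ) (x : Fin (2 ^ k) → ℝ) (i : Fin (2 ^ (k + 1)))
    (h : ¬ (i : ℕ) < 2 ^ k) :
    (Fmat b k).mulVec x i
      = x ⟨2 ^ (k + 1) - 1 - (i : ℕ), by
          have h2 := pow_split k
          have := i.isLt
          have hp : 0 < (2:ℕ) ^ k := Nat.pow_pos (by norm_num)
          omega⟩ := by
  have h2 := pow_split k
  have hi := i.isLt
  have hp : 0 < (2:ℕ) ^ k := Nat.pow_pos (by norm_num)
  unfold Matrix.mulVec dotProduct
  rw [Finset.sum_eq_single (⟨2 ^ (k + 1) - 1 - (i : ℕ), by omega⟩ : Fin (2 ^ k))]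
  · simp only [Fmat_apply, h, if_false]
    rw [if_pos (by omega), one_mul]
  · intro j _ hj
    have hjl := j.isLt
    simp only [Fmat_apply, h, if_false]
    rw [if_neg, zero_mul]
    intro he
    exact hj (by ext; simp; omega)
  · simp

def esum (k : ℕ) : Fin (2 ^ k) ⊕ Fin (2 ^ k) ≃ Fin (2 ^ (k + 1)) :=
  finSumFinEquiv.trans (finCongr (pow_split k).symm)

lemma esum_inl (k : ℕ) (j : Fin (2 ^ k)) : ((esum k (Sum.inl j) : Fin (2 ^ (k+1))) : ℕ) = j := by
  simp [esum]

lemma esum_inr (k : ℕ) (j : Fin (2 ^ k)) :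
    ((esum k (Sum.inr j) : Fin (2 ^ (k+1))) : ℕ) = 2 ^ k + j := by
  simp [esum, Nat.add_comm]

lemma key (k : ℕ) (b b' : Bool) (x y : Fin (2 ^ k) → ℝ) :
    ∑ i, (Fmat b k).mulVec x i * (Fmat b' k).mulVec y i
      = (sg b * sg b' + 1) * ∑ j, x j * y j := by
  have h2 := pow_split k
  have hp : 0 < (2:ℕ) ^ k := Nat.pow_pos (by norm_num)
  rw [← Fintype.sum_equiv (esum k)
      (fun s => (Fmat b k).mulVec x (esum k s) * (Fmat b' k).mulVec y (esum k s))
      _ (fun s => rfl)]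
  rw [Fintype.sum_sum_type]
  have s1 : ∑ j : Fin (2 ^ k),
      (Fmat b k).mulVec x (esum k (Sum.inl j)) * (Fmat b' k).mulVec y (esum k (Sum.inl j))
      = sg b * sg b' * ∑ j, x j * y j := by
    rw [Finset.mul_sum]
    apply Finset.sum_congr rfl
    intro j _
    have hj : ((esum k (Sum.inl j) : Fin (2 ^ (k+1))) : ℕ) < 2 ^ k := by
      rw [esum_inl]; exact j.isLt
    rw [mulVec_lt b k x _ hj, mulVec_lt b' k y _ hj]
    have : (⟨((esum k (Sum.inl j) : Fin (2 ^ (k+1))) : ℕ), hj⟩ : Fin (2 ^ k)) = j := by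
      ext; rw [esum_inl]
    rw [this]; ring
  have s2 : ∑ j : Fin (2 ^ k),
      (Fmat b k).mulVec x (esum k (Sum.inr j)) * (Fmat b' k).mulVec y (esum k (Sum.inr j))
      = ∑ j, x j * y j := by
    have step : ∀ j : Fin (2 ^ k),
        (Fmat b k).mulVec x (esum k (Sum.inr j)) * (Fmat b' k).mulVec y (esum k (Sum.inr j))
        = x j.rev * y j.rev := by
      intro j
      have hj : ¬ ((esum k (Sum.inr j) : Fin (2 ^ (k+1))) : ℕ) < 2 ^ k := by
        rw [esum_inr]; omega
      rw [mulVec_ge b k x _ hj, mulVec_ge b' k y _ hj]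
      have hjr : (⟨2 ^ (k + 1) - 1 - ((esum k (Sum.inr j) : Fin (2 ^ (k+1))) : ℕ), by
          have := (esum k (Sum.inr j)).isLt; omega⟩ : Fin (2 ^ k)) = j.rev := by
        ext
        rw [Fin.val_rev]
        simp only [esum_inr]
        have := j.isLt
        omega
      rw [hjr]
    rw [Finset.sum_congr rfl (fun j _ => step j)]
    exact Fintype.sum_equiv (Fin.revPerm) _ _ (fun i => by simp)
  rw [s1, s2]; ring

lemma ortho (n : ℕ) (c c' : Fin n → Bool) (h : c ≠ c') :
    ∑ i, prodVec n c i * prodVec n c' i = 0 := by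
  induction n with
  | zero => exact absurd (funext fun i => i.elim0) h
  | succ n ih =>
    show ∑ i, (Fmat (c (Fin.last n)) n).mulVec (prodVec n fun i => c i.castSucc) i
        * (Fmat (c' (Fin.last n)) n).mulVec (prodVec n fun i => c' i.castSucc) i = 0
    rw [key]
    by_cases hb : c (Fin.last n) = c' (Fin.last n)
    · have hc : (fun i => c (Fin.castSucc i)) ≠ (fun i => c' (Fin.castSucc i)) := by
        intro he
        apply h
        funext i
        refine Fin.lastCases hb (fun j => ?_) i
        exact congrFun he j
      rw [ih _ _ hc, mul_zero]
    · have : sg (c (Fin.last n)) * sg (c' (Fin.last n)) + 1 = 0 := by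
        rcases Bool.eq_false_or_eq_true (c (Fin.last n)) with h1 | h1 <;>
        rcases Bool.eq_false_or_eq_true (c' (Fin.last n)) with h2 | h2 <;>
          simp [h1, h2, sg] at hb ⊢
      rw [this, zero_mul]

theorem stmt6 (n : ℕ) (hn : 1 ≤ n) (v w : Fin (2 ^ n) → ℝ)
    (hv : v ∈ SA n) (hw : w ∈ SA n) (hvw : v ≠ w) :
    ∑ i, v i * w i = 0 := by
  obtain ⟨c, rfl⟩ := hv
  obtain ⟨c', rfl⟩ := hw
  exact ortho n c c' (fun he => hvw (by rw [he]))
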